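/- Let p > 1, k = 2, f_1 < f_2, L_1, L_2 > 0 and set λ_T = (1/p) · (L_1^{1/(p-1)} + L_2^{1/(p-1)})^{p-1} / (L_1 L_2 (f_2 - f_1)^{p-1}). Then the unique minimizer (u_1, u_2) of G(v_1,v_2) = |v_2 - v_1| + λ(L_1|v_1 - f_1|^p + L_2|v_2 - f_2|^p) is: for λ ≤ λ_T, u_1 = u_2 = (L_1^{1/(p-1)} f_1 + L_2^{1/(p-1)} f_2)/(L_1^{1/(p-1)} + L_2^{1/(p-1)}); and for λ > λ_T, u_1 = f_1 + (pλL_1)^{-1/(p-1)}, u_2 = f_2 - (pλL_2)^{-1/(p-1)}. -/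

import Mathlib

/-- The two-interval discrete energy with `L^p` fidelity. -/
noncomputable def G2 (lam p L1 L2 f1 f2 : ℝ) (v1 v2 : ℝ) : ℝ :=
  |v2 - v1| + lam * (L1 * |v1 - f1| ^ p + L2 * |v2 - f2| ^ p)

private lemma tangent_aux {p : ℝ} (hp : 1 < p) {x y : ℝ} (hx : 0 ≤ x) (hy : 0 < y) :
    y ^ p + p * y ^ (p - 1) * (x - y) ≤ x ^ p := by
  have hs : (-1 : ℝ) ≤ (x - y) / y := by
    rw [le_div_iff₀ hy]; linarith
  have hb := one_add_mul_self_le_rpow_one_add hs hp.le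
  have h1 : (1 : ℝ) + (x - y) / y = x / y := by field_simp; ring
  rw [h1] at hb
  have hyp : (0 : ℝ) < y ^ p := Real.rpow_pos_of_pos hy p
  have hmm := mul_le_mul_of_nonneg_left hb hyp.le
  have hy1 : y ^ p = y ^ (p - 1) * y := by
    rw [← Real.rpow_add_one hy.ne' (p - 1)]; ring_nf
  have hxy : y ^ p * (x / y) ^ p = x ^ p := by
    rw [← Real.mul_rpow hy.le (by positivity), mul_div_cancel₀ _ hy.ne']
  calc y ^ p + p * y ^ (p - 1) * (x - y)
      = y ^ p * (1 + p * ((x - y) / y)) := by rw [hy1]; field_simp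
    _ ≤ y ^ p * (x / y) ^ p := hmm
    _ = x ^ p := hxy

private lemma abs_mid_lt {p : ℝ} (hp : 1 < p) {x y : ℝ} (hxy : x ≠ y) :
    |(x + y) / 2| ^ p < (|x| ^ p + |y| ^ p) / 2 := by
  rcases eq_or_ne |x| |y| with h | h
  · have hx0 : x ≠ 0 := by
      rintro rfl
      simp only [abs_zero] at h
      exact hxy ((abs_eq_zero.mp h.symm)).symm
    have hxny : x = -y := by
      rcases abs_eq_abs.mp h with h' | h'
      · exact absurd h' hxy
      · exact h'
    have hz : (x + y) / 2 = 0 := by rw [hxny]; ring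
    rw [hz, abs_zero, Real.zero_rpow (by positivity : p ≠ 0)]
    have : (0:ℝ) < |x| ^ p := Real.rpow_pos_of_pos (abs_pos.mpr hx0) p
    rw [← h]
    linarith
  · have h1 : |(x + y) / 2| ≤ (|x| + |y|) / 2 := by
      rw [abs_div, abs_two]
      gcongr
      exact abs_add_le x y
    have h2 : |(x + y) / 2| ^ p ≤ ((|x| + |y|) / 2) ^ p :=
      Real.rpow_le_rpow (abs_nonneg _) h1 (by linarith)
    have h3 := (strictConvexOn_rpow hp).2 (Set.mem_Ici.mpr (abs_nonneg x))
      (Set.mem_Ici.mpr (abs_nonneg y)) h (by norm_num : (0:ℝ) < 1/2)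
      (by norm_num : (0:ℝ) < 1/2) (by norm_num)
    simp only [smul_eq_mul] at h3
    have e : (1/2 : ℝ) * |x| + (1/2 : ℝ) * |y| = (|x| + |y|) / 2 := by ring
    rw [e] at h3
    linarith

private lemma abs_mid_le {p : ℝ} (hp : 1 < p) (x y : ℝ) :
    |(x + y) / 2| ^ p ≤ (|x| ^ p + |y| ^ p) / 2 := by
  rcases eq_or_ne x y with rfl | h
  · have : (x + x) / 2 = x := by ring
    rw [this]; linarith
  · exact (abs_mid_lt hp h).le

private lemma tri_aux {f1 f2 : ℝ} (v1 v2 : ℝ) :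
    f2 - f1 ≤ |v2 - v1| + |v1 - f1| + |v2 - f2| := by
  have h1 := le_abs_self (v1 - f1)
  have h2 := le_abs_self (v2 - v1)
  have h3 := le_abs_self (f2 - v2)
  have h4 : |f2 - v2| = |v2 - f2| := abs_sub_comm _ _
  linarith

private lemma uniq_min {lam p L1 L2 f1 f2 : ℝ} (hp : 1 < p) (hlam : 0 < lam)
    (hL1 : 0 < L1) (hL2 : 0 < L2) {u1 u2 c1 c2 : ℝ}
    (hu : ∀ v1 v2, G2 lam p L1 L2 f1 f2 u1 u2 ≤ G2 lam p L1 L2 f1 f2 v1 v2)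
    (hc : ∀ v1 v2, G2 lam p L1 L2 f1 f2 c1 c2 ≤ G2 lam p L1 L2 f1 f2 v1 v2) :
    u1 = c1 ∧ u2 = c2 := by
  by_contra hne
  have hGeq : G2 lam p L1 L2 f1 f2 u1 u2 = G2 lam p L1 L2 f1 f2 c1 c2 :=
    le_antisymm (hu c1 c2) (hc u1 u2)
  have hw := hu ((u1 + c1) / 2) ((u2 + c2) / 2)
  have habs : |(u2 + c2) / 2 - (u1 + c1) / 2| ≤ (|u2 - u1| + |c2 - c1|) / 2 := by
    have e : (u2 + c2) / 2 - (u1 + c1) / 2 = ((u2 - u1) + (c2 - c1)) / 2 := by ring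
    rw [e, abs_div, abs_two]
    gcongr
    exact abs_add_le _ _
  have h1 : |(u1 + c1) / 2 - f1| ^ p ≤ (|u1 - f1| ^ p + |c1 - f1| ^ p) / 2 := by
    have e : (u1 + c1) / 2 - f1 = ((u1 - f1) + (c1 - f1)) / 2 := by ring
    rw [e]; exact abs_mid_le hp _ _
  have h2 : |(u2 + c2) / 2 - f2| ^ p ≤ (|u2 - f2| ^ p + |c2 - f2| ^ p) / 2 := by
    have e : (u2 + c2) / 2 - f2 = ((u2 - f2) + (c2 - f2)) / 2 := by ring
    rw [e]; exact abs_mid_le hp _ _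
  have key : L1 * |(u1 + c1) / 2 - f1| ^ p + L2 * |(u2 + c2) / 2 - f2| ^ p <
      (L1 * |u1 - f1| ^ p + L2 * |u2 - f2| ^ p +
        (L1 * |c1 - f1| ^ p + L2 * |c2 - f2| ^ p)) / 2 := by
    rcases not_and_or.mp hne with h | h
    · have h1' : |(u1 + c1) / 2 - f1| ^ p < (|u1 - f1| ^ p + |c1 - f1| ^ p) / 2 := by
        have e : (u1 + c1) / 2 - f1 = ((u1 - f1) + (c1 - f1)) / 2 := by ring
        rw [e]; exact abs_mid_lt hp (by intro he; exact h (by linarith))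
      nlinarith [mul_lt_mul_of_pos_left h1' hL1, mul_le_mul_of_nonneg_left h2 hL2.le]
    · have h2' : |(u2 + c2) / 2 - f2| ^ p < (|u2 - f2| ^ p + |c2 - f2| ^ p) / 2 := by
        have e : (u2 + c2) / 2 - f2 = ((u2 - f2) + (c2 - f2)) / 2 := by ring
        rw [e]; exact abs_mid_lt hp (by intro he; exact h (by linarith))
      nlinarith [mul_lt_mul_of_pos_left h2' hL2, mul_le_mul_of_nonneg_left h1 hL1.le]
  have hkey := mul_lt_mul_of_pos_left key hlam
  simp only [G2] at hw hGeq
  nlinarith [hw, hGeq, habs, hkey]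

private lemma min_low {p lam L1 L2 f1 f2 : ℝ} (hp : 1 < p) (hlam : 0 < lam)
    (hL1 : 0 < L1) (hL2 : 0 < L2) (hf : f1 < f2)
    (hle : lam ≤ (1 / p) * (L1 ^ ((1 : ℝ) / (p - 1)) + L2 ^ ((1 : ℝ) / (p - 1))) ^ (p - 1) /
        (L1 * L2 * (f2 - f1) ^ (p - 1))) :
    ∀ v1 v2, G2 lam p L1 L2 f1 f2
      ((L1 ^ ((1 : ℝ) / (p - 1)) * f1 + L2 ^ ((1 : ℝ) / (p - 1)) * f2) /
          (L1 ^ ((1 : ℝ) / (p - 1)) + L2 ^ ((1 : ℝ) / (p - 1))))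
      ((L1 ^ ((1 : ℝ) / (p - 1)) * f1 + L2 ^ ((1 : ℝ) / (p - 1)) * f2) /
          (L1 ^ ((1 : ℝ) / (p - 1)) + L2 ^ ((1 : ℝ) / (p - 1)))) ≤
      G2 lam p L1 L2 f1 f2 v1 v2 := by
  intro v1 v2
  have hp1 : (0 : ℝ) < p - 1 := by linarith
  have hp0 : (0 : ℝ) < p := by linarith
  set a := L1 ^ ((1 : ℝ) / (p - 1)) with ha_def
  set b := L2 ^ ((1 : ℝ) / (p - 1)) with hb_def
  have ha : 0 < a := Real.rpow_pos_of_pos hL1 _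
  have hb : 0 < b := Real.rpow_pos_of_pos hL2 _
  have hone : ((1 : ℝ) / (p - 1)) * (p - 1) = 1 := by field_simp
  have haL : a ^ (p - 1) = L1 := by
    rw [ha_def, ← Real.rpow_mul hL1.le, hone, Real.rpow_one]
  have hbL : b ^ (p - 1) = L2 := by
    rw [hb_def, ← Real.rpow_mul hL2.le, hone, Real.rpow_one]
  have hF : (0 : ℝ) < (f2 - f1) ^ (p - 1) := Real.rpow_pos_of_pos (by linarith) _
  have hA : (0 : ℝ) < (a + b) ^ (p - 1) := Real.rpow_pos_of_pos (by linarith) _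
  set m := (a * f1 + b * f2) / (a + b) with hm_def
  have hm1 : m - f1 = b * (f2 - f1) / (a + b) := by
    rw [hm_def]; field_simp; ring
  have hm2 : f2 - m = a * (f2 - f1) / (a + b) := by
    rw [hm_def]; field_simp; ring
  have hm1p : 0 < m - f1 := by rw [hm1]; exact div_pos (mul_pos hb (by linarith)) (by linarith)
  have hm2p : 0 < f2 - m := by rw [hm2]; exact div_pos (mul_pos ha (by linarith)) (by linarith)
  set μ := p * lam * L1 * L2 * (f2 - f1) ^ (p - 1) / (a + b) ^ (p - 1) with hμ_def
  have hμpos : 0 < μ := by rw [hμ_def]; exact div_pos (by positivity) hA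
  have hμ1 : p * lam * L1 * (m - f1) ^ (p - 1) = μ := by
    rw [hm1, Real.div_rpow (by exact mul_nonneg hb.le (by linarith)) (by linarith : (0:ℝ) ≤ a + b),
      Real.mul_rpow hb.le (by linarith : (0:ℝ) ≤ f2 - f1), hbL, hμ_def]
    ring
  have hμ2 : p * lam * L2 * (f2 - m) ^ (p - 1) = μ := by
    rw [hm2, Real.div_rpow (by exact mul_nonneg ha.le (by linarith)) (by linarith : (0:ℝ) ≤ a + b),
      Real.mul_rpow ha.le (by linarith : (0:ℝ) ≤ f2 - f1), haL, hμ_def]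
    ring
  have hμle : μ ≤ 1 := by
    have hD : (0 : ℝ) < L1 * L2 * (f2 - f1) ^ (p - 1) := by positivity
    have h1 := (le_div_iff₀ hD).mp hle
    have e : p * ((1 / p) * (a + b) ^ (p - 1)) = (a + b) ^ (p - 1) := by
      field_simp
    rw [hμ_def, div_le_one hA]
    linarith [mul_le_mul_of_nonneg_left h1 hp0.le, e]
  -- tangent bounds
  have k1 : lam * L1 * (m - f1) ^ p + μ * (|v1 - f1| - (m - f1)) ≤ lam * L1 * |v1 - f1| ^ p := by
    have htan := tangent_aux hp (abs_nonneg (v1 - f1)) hm1p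
    have hmm := mul_le_mul_of_nonneg_left htan (by positivity : (0:ℝ) ≤ lam * L1)
    have e : lam * L1 * (p * (m - f1) ^ (p - 1) * (|v1 - f1| - (m - f1))) =
        μ * (|v1 - f1| - (m - f1)) := by
      rw [← hμ1]; ring
    linarith [hmm, e]
  have k2 : lam * L2 * (f2 - m) ^ p + μ * (|v2 - f2| - (f2 - m)) ≤ lam * L2 * |v2 - f2| ^ p := by
    have htan := tangent_aux hp (abs_nonneg (v2 - f2)) hm2p
    have hmm := mul_le_mul_of_nonneg_left htan (by positivity : (0:ℝ) ≤ lam * L2)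
    have e : lam * L2 * (p * (f2 - m) ^ (p - 1) * (|v2 - f2| - (f2 - m))) =
        μ * (|v2 - f2| - (f2 - m)) := by
      rw [← hμ2]; ring
    linarith [hmm, e]
  have tri := tri_aux (f1 := f1) (f2 := f2) v1 v2
  have tri2 := mul_le_mul_of_nonneg_left tri hμpos.le
  have habs2 : μ * |v2 - v1| ≤ |v2 - v1| := mul_le_of_le_one_left (abs_nonneg _) hμle
  simp only [G2]
  rw [sub_self, abs_zero, abs_of_pos hm1p, abs_of_neg (by linarith : m - f2 < 0), neg_sub]
  linarith [k1, k2, tri2, habs2]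

set_option maxHeartbeats 1600000 in
private lemma min_high {p lam L1 L2 f1 f2 : ℝ} (hp : 1 < p) (hlam : 0 < lam)
    (hL1 : 0 < L1) (hL2 : 0 < L2) (hf : f1 < f2)
    (hgt : (1 / p) * (L1 ^ ((1 : ℝ) / (p - 1)) + L2 ^ ((1 : ℝ) / (p - 1))) ^ (p - 1) /
        (L1 * L2 * (f2 - f1) ^ (p - 1)) < lam) :
    ∀ v1 v2, G2 lam p L1 L2 f1 f2
      (f1 + (p * lam * L1) ^ (-(1 : ℝ) / (p - 1)))
      (f2 - (p * lam * L2) ^ (-(1 : ℝ) / (p - 1))) ≤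
      G2 lam p L1 L2 f1 f2 v1 v2 := by
  intro v1 v2
  have hp1 : (0 : ℝ) < p - 1 := by linarith
  have hp0 : (0 : ℝ) < p := by linarith
  set a := L1 ^ ((1 : ℝ) / (p - 1)) with ha_def
  set b := L2 ^ ((1 : ℝ) / (p - 1)) with hb_def
  have ha : 0 < a := Real.rpow_pos_of_pos hL1 _
  have hb : 0 < b := Real.rpow_pos_of_pos hL2 _
  have hone : ((1 : ℝ) / (p - 1)) * (p - 1) = 1 := by field_simp
  have haL : a ^ (p - 1) = L1 := by
    rw [ha_def, ← Real.rpow_mul hL1.le, hone, Real.rpow_one]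
  have hbL : b ^ (p - 1) = L2 := by
    rw [hb_def, ← Real.rpow_mul hL2.le, hone, Real.rpow_one]
  have hF : (0 : ℝ) < (f2 - f1) ^ (p - 1) := Real.rpow_pos_of_pos (by linarith) _
  have hA : (0 : ℝ) < (a + b) ^ (p - 1) := Real.rpow_pos_of_pos (by linarith) _
  set d1 := (p * lam * L1) ^ (-(1 : ℝ) / (p - 1)) with hd1_def
  set d2 := (p * lam * L2) ^ (-(1 : ℝ) / (p - 1)) with hd2_def
  have hd1 : 0 < d1 := Real.rpow_pos_of_pos (by positivity) _
  have hd2 : 0 < d2 := Real.rpow_pos_of_pos (by positivity) _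
  have hexp : (-(1 : ℝ) / (p - 1)) * (p - 1) = -1 := by field_simp
  have h1eq : p * lam * L1 * d1 ^ (p - 1) = 1 := by
    rw [hd1_def, ← Real.rpow_mul (by positivity), hexp, Real.rpow_neg_one]
    exact mul_inv_cancel₀ (by positivity)
  have h2eq : p * lam * L2 * d2 ^ (p - 1) = 1 := by
    rw [hd2_def, ← Real.rpow_mul (by positivity), hexp, Real.rpow_neg_one]
    exact mul_inv_cancel₀ (by positivity)
  -- splitting: d1 + d2 < f2 - f1
  set c := (p * lam) ^ (-(1 : ℝ) / (p - 1)) with hc_def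
  have hc : 0 < c := Real.rpow_pos_of_pos (by positivity) _
  have hnegdiv : (-(1 : ℝ) / (p - 1)) = -((1 : ℝ) / (p - 1)) := by ring
  have hd1c : d1 = c / a := by
    rw [hd1_def, hc_def, Real.mul_rpow (by positivity) hL1.le, hnegdiv,
      Real.rpow_neg hL1.le, ha_def]
    exact (div_eq_mul_inv _ _).symm
  have hd2c : d2 = c / b := by
    rw [hd2_def, hc_def, Real.mul_rpow (by positivity) hL2.le, hnegdiv,
      Real.rpow_neg hL2.le, hb_def]
    exact (div_eq_mul_inv _ _).symm
  have hcp : c ^ (p - 1) = (p * lam)⁻¹ := by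
    rw [hc_def, ← Real.rpow_mul (by positivity), hexp, Real.rpow_neg_one]
  clear_value a b d1 d2 c
  have hsplit : d1 + d2 < f2 - f1 := by
    have hcR : c < a * b * (f2 - f1) / (a + b) := by
      by_contra hR
      push_neg at hR
      have habf : (0:ℝ) < a * b * (f2 - f1) := mul_pos (mul_pos ha hb) (by linarith)
      have hRpos : (0:ℝ) < a * b * (f2 - f1) / (a + b) := div_pos habf (by linarith)
      have hmono := Real.rpow_le_rpow hRpos.le hR hp1.le
      have hRe : (a * b * (f2 - f1) / (a + b)) ^ (p - 1) =
          L1 * L2 * (f2 - f1) ^ (p - 1) / (a + b) ^ (p - 1) := by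
        rw [Real.div_rpow habf.le (by linarith),
          Real.mul_rpow (mul_pos ha hb).le (by linarith : (0:ℝ) ≤ f2 - f1),
          Real.mul_rpow ha.le hb.le, haL, hbL]
      rw [hRe, hcp] at hmono
      -- from hgt : (1/p) * (a+b)^(p-1) / (L1*L2*F) < lam
      have hD : (0 : ℝ) < L1 * L2 * (f2 - f1) ^ (p - 1) := by positivity
      have h1 := (div_lt_iff₀ hD).mp hgt
      have e : p * ((1 / p) * (a + b) ^ (p - 1)) = (a + b) ^ (p - 1) := by field_simp
      have h2 : (a + b) ^ (p - 1) < p * lam * (L1 * L2 * (f2 - f1) ^ (p - 1)) := by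
        linarith [mul_lt_mul_of_pos_left h1 hp0, e]
      have h3 : (p * lam)⁻¹ < L1 * L2 * (f2 - f1) ^ (p - 1) / (a + b) ^ (p - 1) := by
        rw [lt_div_iff₀ hA]
        have hpl : (0:ℝ) < p * lam := by positivity
        have e2 : (p * lam)⁻¹ * (p * lam * (L1 * L2 * (f2 - f1) ^ (p - 1))) =
            L1 * L2 * (f2 - f1) ^ (p - 1) := by field_simp
        nlinarith [mul_lt_mul_of_pos_left h2 (inv_pos.mpr hpl), e2]
      linarith
    have hq := mul_lt_mul_of_pos_right hcR (show (0:ℝ) < (a + b) / (a * b) from div_pos (by linarith) (mul_pos ha hb))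
    have e1 : c * ((a + b) / (a * b)) = d1 + d2 := by
      rw [hd1c, hd2c]; field_simp; ring
    have e2 : a * b * (f2 - f1) / (a + b) * ((a + b) / (a * b)) = f2 - f1 := by
      field_simp
    rw [e1, e2] at hq
    exact hq
  -- minimality
  have k1 : lam * L1 * d1 ^ p + (|v1 - f1| - d1) ≤ lam * L1 * |v1 - f1| ^ p := by
    have htan := tangent_aux hp (abs_nonneg (v1 - f1)) hd1
    have hmm := mul_le_mul_of_nonneg_left htan (by positivity : (0:ℝ) ≤ lam * L1)
    have e : lam * L1 * (p * d1 ^ (p - 1) * (|v1 - f1| - d1)) = |v1 - f1| - d1 := by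
      linear_combination (|v1 - f1| - d1) * h1eq
    linarith [hmm, e]
  have k2 : lam * L2 * d2 ^ p + (|v2 - f2| - d2) ≤ lam * L2 * |v2 - f2| ^ p := by
    have htan := tangent_aux hp (abs_nonneg (v2 - f2)) hd2
    have hmm := mul_le_mul_of_nonneg_left htan (by positivity : (0:ℝ) ≤ lam * L2)
    have e : lam * L2 * (p * d2 ^ (p - 1) * (|v2 - f2| - d2)) = |v2 - f2| - d2 := by
      linear_combination (|v2 - f2| - d2) * h2eq
    linarith [hmm, e]
  have tri := tri_aux (f1 := f1) (f2 := f2) v1 v2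
  simp only [G2]
  have e1 : |f1 + d1 - f1| = d1 := by rw [add_sub_cancel_left, abs_of_pos hd1]
  have e2 : |f2 - d2 - f2| = d2 := by
    have : f2 - d2 - f2 = -d2 := by ring
    rw [this, abs_neg, abs_of_pos hd2]
  have e3 : |f2 - d2 - (f1 + d1)| = f2 - f1 - d1 - d2 := by
    rw [abs_of_pos (by linarith)]; ring
  rw [e1, e2, e3]
  linarith [k1, k2, tri]

/-- explicit solution for `k = 2` and `p > 1`: below the threshold
`λ_T` the minimizer is a constant (a weighted average of `f₁, f₂`), above it the
two entries split off from `f₁, f₂` by `(pλLᵢ)^{-1/(p-1)}`. -/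
theorem stmt18 (p lam L1 L2 f1 f2 u1 u2 : ℝ) (hp : 1 < p) (hlam : 0 < lam)
    (hL1 : 0 < L1) (hL2 : 0 < L2) (hf : f1 < f2)
    (hmin : ∀ v1 v2 : ℝ, G2 lam p L1 L2 f1 f2 u1 u2 ≤ G2 lam p L1 L2 f1 f2 v1 v2) :
    (lam ≤ (1 / p) * (L1 ^ ((1 : ℝ) / (p - 1)) + L2 ^ ((1 : ℝ) / (p - 1))) ^ (p - 1) /
        (L1 * L2 * (f2 - f1) ^ (p - 1)) →
      u1 = (L1 ^ ((1 : ℝ) / (p - 1)) * f1 + L2 ^ ((1 : ℝ) / (p - 1)) * f2) /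
          (L1 ^ ((1 : ℝ) / (p - 1)) + L2 ^ ((1 : ℝ) / (p - 1))) ∧
      u2 = (L1 ^ ((1 : ℝ) / (p - 1)) * f1 + L2 ^ ((1 : ℝ) / (p - 1)) * f2) /
          (L1 ^ ((1 : ℝ) / (p - 1)) + L2 ^ ((1 : ℝ) / (p - 1)))) ∧
    ((1 / p) * (L1 ^ ((1 : ℝ) / (p - 1)) + L2 ^ ((1 : ℝ) / (p - 1))) ^ (p - 1) /
        (L1 * L2 * (f2 - f1) ^ (p - 1)) < lam →
      u1 = f1 + (p * lam * L1) ^ (-(1 : ℝ) / (p - 1)) ∧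
      u2 = f2 - (p * lam * L2) ^ (-(1 : ℝ) / (p - 1))) := by
  constructor
  · intro h
    exact uniq_min hp hlam hL1 hL2 hmin (min_low hp hlam hL1 hL2 hf h)
  · intro h
    exact uniq_min hp hlam hL1 hL2 hmin (min_high hp hlam hL1 hL2 hf h)
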